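/- Let n ≥ 2 and σ be a real number with σ ≥ (n−2)·π/2, and let λ₁ ≥ λ₂ ≥ … ≥ λₙ be real numbers with ∑_{i=1}^n arctan(λᵢ) = σ. Then for every k with 1 ≤ k ≤ n−1, the k-th elementary symmetric polynomial σ_k(λ) = ∑_{S ⊆ {1,…,n}, |S| = k} ∏_{i∈S} λᵢ is nonnegative. -/
import Mathlib

open Real Finset

lemma my_arctan_add_le {x y : ℝ} (hx : 0 ≤ x) (hy : 0 ≤ y) :
    Real.arctan (x + y) ≤ Real.arctan x + Real.arctan y := by
  rcases lt_or_ge (x * y) 1 with h | h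
  · rw [Real.arctan_add h]
    apply Real.arctan_strictMono.monotone
    have h1 : 0 < 1 - x * y := by linarith
    rw [le_div_iff₀ h1]
    nlinarith [mul_nonneg hx hy, mul_nonneg (mul_nonneg hx hy) (add_nonneg hx hy)]
  · have hx0 : 0 < x := by nlinarith
    have hy0 : 0 < y := by nlinarith
    have h2 : Real.arctan y⁻¹ ≤ Real.arctan x := by
      apply Real.arctan_strictMono.monotone
      rw [inv_le_iff_one_le_mul₀ hy0]
      nlinarith
    rw [Real.arctan_inv_of_pos hy0] at h2
    have h3 := Real.arctan_lt_pi_div_two (x + y)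
    linarith

lemma my_arctan_sum_le {ι : Type*} (s : Finset ι) (f : ι → ℝ)
    (hf : ∀ i ∈ s, 0 ≤ f i) :
    Real.arctan (∑ i ∈ s, f i) ≤ ∑ i ∈ s, Real.arctan (f i) := by
  induction s using Finset.cons_induction with
  | empty => simp
  | cons a t ha ih =>
    rw [Finset.sum_cons, Finset.sum_cons]
    have h1 : 0 ≤ ∑ i ∈ t, f i :=
      Finset.sum_nonneg fun i hi => hf i (Finset.mem_cons_of_mem hi)
    calc Real.arctan (f a + ∑ i ∈ t, f i)
        ≤ Real.arctan (f a) + Real.arctan (∑ i ∈ t, f i) :=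
          my_arctan_add_le (hf a (Finset.mem_cons_self _ _)) h1
      _ ≤ Real.arctan (f a) + ∑ i ∈ t, Real.arctan (f i) := by
          have := ih (fun i hi => hf i (Finset.mem_cons_of_mem hi))
          linarith

lemma my_esymm_nonneg {ι : Type*} (s : Finset ι) (f : ι → ℝ)
    (hf : ∀ i ∈ s, 0 ≤ f i) (k : ℕ) :
    0 ≤ ∑ S ∈ s.powersetCard k, ∏ i ∈ S, f i :=
  Finset.sum_nonneg fun S hS => Finset.prod_nonneg fun i hi =>
    hf i ((Finset.mem_powersetCard.mp hS).1 hi)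

lemma my_esymm_step {ι : Type*} [LinearOrder ι] [Nonempty ι] {s : Finset ι} {f : ι → ℝ}
    (hf : ∀ i ∈ s, 0 < f i) {μ : ℝ} (hμ : 0 ≤ μ)
    (hms : μ * ∑ j ∈ s, (f j)⁻¹ ≤ 1) {m : ℕ} (hk2 : m + 1 ≤ s.card) :
    μ * ∑ S ∈ s.powersetCard m, ∏ i ∈ S, f i
      ≤ ∑ S ∈ s.powersetCard (m + 1), ∏ i ∈ S, f i := by
  classical
  have hEknn : 0 ≤ ∑ S ∈ s.powersetCard (m + 1), ∏ i ∈ S, f i :=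
    my_esymm_nonneg s f (fun i hi => (hf i hi).le) (m + 1)
  have keyA : ∑ S ∈ s.powersetCard m, ∏ i ∈ S, f i
      ≤ ∑ p ∈ ((s.powersetCard (m + 1)) ×ˢ s).filter (fun p => p.2 ∈ p.1),
          ∏ i ∈ p.1.erase p.2, f i := by
    have hne : ∀ S ∈ s.powersetCard m, (s \ S).Nonempty := by
      intro S hS
      rw [Finset.mem_powersetCard] at hS
      have hcard : (s \ S).card = s.card - m := by
        rw [Finset.card_sdiff_of_subset hS.1, hS.2]
      rw [← Finset.card_pos, hcard]
      omega
    set ψ : Finset ι → Finset ι × ι := fun S =>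
      if h : (s \ S).Nonempty then (insert ((s \ S).min' h) S, (s \ S).min' h)
      else (∅, Classical.arbitrary ι) with hψ
    have hψ_def : ∀ S ∈ s.powersetCard m, ∀ (h : (s \ S).Nonempty),
        ψ S = (insert ((s \ S).min' h) S, (s \ S).min' h) := by
      intro S hS h
      simp only [hψ, dif_pos h]
    have hψ_erase : ∀ S ∈ s.powersetCard m, ((ψ S).1).erase (ψ S).2 = S := by
      intro S hS
      rw [hψ_def S hS (hne S hS)]
      have hj := (s \ S).min'_mem (hne S hS)
      rw [Finset.mem_sdiff] at hj
      exact Finset.erase_insert hj.2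
    have hψ_mem : ∀ S ∈ s.powersetCard m,
        ψ S ∈ ((s.powersetCard (m + 1)) ×ˢ s).filter (fun p => p.2 ∈ p.1) := by
      intro S hS
      rw [hψ_def S hS (hne S hS), Finset.mem_filter, Finset.mem_product]
      have hj := (s \ S).min'_mem (hne S hS)
      rw [Finset.mem_sdiff] at hj
      rw [Finset.mem_powersetCard] at hS
      refine ⟨⟨?_, hj.1⟩, Finset.mem_insert_self _ _⟩
      rw [Finset.mem_powersetCard]
      refine ⟨Finset.insert_subset hj.1 hS.1, ?_⟩
      rw [Finset.card_insert_of_notMem hj.2, hS.2]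
    have hinj : ∀ S₁ ∈ s.powersetCard m, ∀ S₂ ∈ s.powersetCard m,
        ψ S₁ = ψ S₂ → S₁ = S₂ := by
      intro S₁ h₁ S₂ h₂ heq
      rw [← hψ_erase S₁ h₁, ← hψ_erase S₂ h₂, heq]
    calc ∑ S ∈ s.powersetCard m, ∏ i ∈ S, f i
        = ∑ S ∈ s.powersetCard m, ∏ i ∈ ((ψ S).1).erase (ψ S).2, f i := by
          apply Finset.sum_congr rfl
          intro S hS
          rw [hψ_erase S hS]
      _ = ∑ p ∈ (s.powersetCard m).image ψ, ∏ i ∈ p.1.erase p.2, f i := by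
          rw [Finset.sum_image hinj]
      _ ≤ _ := by
          apply Finset.sum_le_sum_of_subset_of_nonneg
          · intro p hp
            rw [Finset.mem_image] at hp
            obtain ⟨S, hS, rfl⟩ := hp
            exact hψ_mem S hS
          · intro p hp _
            apply Finset.prod_nonneg
            intro i hi
            rw [Finset.mem_filter, Finset.mem_product] at hp
            have hip : i ∈ p.1 := Finset.mem_of_mem_erase hi
            exact (hf i ((Finset.mem_powersetCard.mp hp.1.1).1 hip)).le
  have keyB : ∑ p ∈ ((s.powersetCard (m + 1)) ×ˢ s).filter (fun p => p.2 ∈ p.1),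
        ∏ i ∈ p.1.erase p.2, f i
      ≤ (∑ j ∈ s, (f j)⁻¹) * ∑ S ∈ s.powersetCard (m + 1), ∏ i ∈ S, f i := by
    have hstep1 : ∑ p ∈ ((s.powersetCard (m + 1)) ×ˢ s).filter (fun p => p.2 ∈ p.1),
          ∏ i ∈ p.1.erase p.2, f i
        = ∑ p ∈ ((s.powersetCard (m + 1)) ×ˢ s).filter (fun p => p.2 ∈ p.1),
          (f p.2)⁻¹ * ∏ i ∈ p.1, f i := by
      apply Finset.sum_congr rfl
      intro p hp
      rw [Finset.mem_filter] at hp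
      have hfp : 0 < f p.2 := by
        rw [Finset.mem_product] at hp
        exact hf p.2 hp.1.2
      rw [← Finset.mul_prod_erase p.1 f hp.2, ← mul_assoc,
        inv_mul_cancel₀ hfp.ne', one_mul]
    rw [hstep1]
    have hstep2 : ∑ p ∈ ((s.powersetCard (m + 1)) ×ˢ s).filter (fun p => p.2 ∈ p.1),
          (f p.2)⁻¹ * ∏ i ∈ p.1, f i
        ≤ ∑ p ∈ (s.powersetCard (m + 1)) ×ˢ s, (f p.2)⁻¹ * ∏ i ∈ p.1, f i := by
      apply Finset.sum_le_sum_of_subset_of_nonneg (Finset.filter_subset _ _)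
      intro p hp _
      rw [Finset.mem_product] at hp
      refine mul_nonneg (inv_nonneg.mpr (hf p.2 hp.2).le) (Finset.prod_nonneg ?_)
      intro i hi
      exact (hf i ((Finset.mem_powersetCard.mp hp.1).1 hi)).le
    refine hstep2.trans ?_
    rw [Finset.sum_product, Finset.mul_sum]
    apply le_of_eq
    apply Finset.sum_congr rfl
    intro T _
    rw [Finset.sum_mul]
  calc μ * ∑ S ∈ s.powersetCard m, ∏ i ∈ S, f i
      ≤ μ * ((∑ j ∈ s, (f j)⁻¹) * ∑ S ∈ s.powersetCard (m + 1), ∏ i ∈ S, f i) :=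
        mul_le_mul_of_nonneg_left (keyA.trans keyB) hμ
    _ = (μ * ∑ j ∈ s, (f j)⁻¹) * ∑ S ∈ s.powersetCard (m + 1), ∏ i ∈ S, f i := by
        ring
    _ ≤ 1 * ∑ S ∈ s.powersetCard (m + 1), ∏ i ∈ S, f i :=
        mul_le_mul_of_nonneg_right hms hEknn
    _ = _ := one_mul _

/-- Wang–Yuan arithmetic lemma, part (ii): if `λ₁ ≥ … ≥ λₙ` satisfy
`∑ arctan λᵢ = σ ≥ (n-2)π/2`, then the elementary symmetric polynomials
`σ_k(λ)` are nonnegative for `1 ≤ k ≤ n-1`. -/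
theorem dHYM_elementary_symmetric_nonneg
    (n : ℕ) (hn : 2 ≤ n) (σ : ℝ)
    (hσ : ((n : ℝ) - 2) * π / 2 ≤ σ)
    (lam : Fin n → ℝ) (hlam : Antitone lam)
    (hsum : ∑ i, Real.arctan (lam i) = σ)
    (k : ℕ) (hk1 : 1 ≤ k) (hk2 : k ≤ n - 1) :
    0 ≤ ∑ S ∈ Finset.powersetCard k (Finset.univ : Finset (Fin n)),
        ∏ i ∈ S, lam i := by
  classical
  have hn1 : n - 1 < n := by omega
  set i0 : Fin n := ⟨n - 1, hn1⟩ with hi0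
  have hle : ∀ i : Fin n, lam i0 ≤ lam i := by
    intro i
    apply hlam
    rw [Fin.le_def]
    have hlt := i.isLt
    show (i : ℕ) ≤ n - 1
    omega
  rcases le_or_gt 0 (lam i0) with hpos | hneg
  · exact Finset.sum_nonneg fun S _ => Finset.prod_nonneg fun i _ =>
      le_trans hpos (hle i)
  set μ : ℝ := -lam i0 with hμdef
  have hμ : 0 < μ := by simp only [hμdef]; linarith
  set s : Finset (Fin n) := Finset.univ.erase i0 with hs
  have hi0s : i0 ∉ s := Finset.notMem_erase _ _
  have hins : insert i0 s = Finset.univ := Finset.insert_erase (Finset.mem_univ i0)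
  have hcards : s.card = n - 1 := by
    rw [hs, Finset.card_erase_of_mem (Finset.mem_univ i0), Finset.card_univ,
      Fintype.card_fin]
  have hsum_s : ∑ i ∈ s, Real.arctan (lam i) = σ - Real.arctan (lam i0) := by
    have h := Finset.add_sum_erase Finset.univ (fun i => Real.arctan (lam i))
      (Finset.mem_univ i0)
    rw [hsum] at h
    rw [hs]
    linarith
  have harc_i0 : Real.arctan (lam i0) = -Real.arctan μ := by
    have : lam i0 = -μ := by rw [hμdef]; ring
    rw [this, Real.arctan_neg]
  -- positivity of lam on s
  have hθpos : ∀ j ∈ s, Real.arctan μ ≤ Real.arctan (lam j) := by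
    intro j hj
    have hsplit : Real.arctan (lam j) + ∑ i ∈ s.erase j, Real.arctan (lam i)
        = σ - Real.arctan (lam i0) := by
      rw [← hsum_s, Finset.add_sum_erase s (fun i => Real.arctan (lam i)) hj]
    have hcard2 : (s.erase j).card = n - 2 := by
      rw [Finset.card_erase_of_mem hj, hcards]
      omega
    have hbound : ∑ i ∈ s.erase j, Real.arctan (lam i)
        ≤ ((n : ℝ) - 2) * (π / 2) := by
      have h1 : ∑ i ∈ s.erase j, Real.arctan (lam i)
          ≤ (s.erase j).card • (π / 2) :=
        Finset.sum_le_card_nsmul _ _ _ fun i _ => (Real.arctan_lt_pi_div_two _).le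
      rw [nsmul_eq_mul, hcard2] at h1
      have hc : ((n - 2 : ℕ) : ℝ) = (n : ℝ) - 2 := by
        push_cast [Nat.cast_sub hn]
        ring
      rw [hc] at h1
      exact h1
    rw [harc_i0] at hsplit
    have hσ' : ((n : ℝ) - 2) * (π / 2) ≤ σ := by linarith [hσ]
    linarith
  have hfpos : ∀ j ∈ s, 0 < lam j := by
    intro j hj
    have h1 : Real.arctan 0 < Real.arctan μ := Real.arctan_strictMono hμ
    rw [Real.arctan_zero] at h1
    have h2 := hθpos j hj
    by_contra h
    push_neg at h
    have h3 := Real.arctan_strictMono.monotone h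
    rw [Real.arctan_zero] at h3
    linarith
  -- inverse-sum estimate
  have hinv : ∑ j ∈ s, Real.arctan (lam j)⁻¹ ≤ Real.arctan μ⁻¹ := by
    have h1 : ∑ j ∈ s, Real.arctan (lam j)⁻¹
        = ∑ j ∈ s, (π / 2 - Real.arctan (lam j)) :=
      Finset.sum_congr rfl fun j hj => Real.arctan_inv_of_pos (hfpos j hj)
    have h2 : ∑ j ∈ s, (π / 2 - Real.arctan (lam j))
        = (s.card : ℝ) * (π / 2) - ∑ j ∈ s, Real.arctan (lam j) := by
      rw [Finset.sum_sub_distrib, Finset.sum_const, nsmul_eq_mul]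
    have hcast : ((s.card : ℕ) : ℝ) = (n : ℝ) - 1 := by
      rw [hcards]
      push_cast [Nat.cast_sub (by omega : 1 ≤ n)]
      ring
    rw [Real.arctan_inv_of_pos hμ, h1, h2, hcast, hsum_s, harc_i0]
    have hσ' : ((n : ℝ) - 2) * (π / 2) ≤ σ := by linarith [hσ]
    linarith
  have hsum_inv : μ * ∑ j ∈ s, (lam j)⁻¹ ≤ 1 := by
    have h1 : Real.arctan (∑ j ∈ s, (lam j)⁻¹) ≤ Real.arctan μ⁻¹ :=
      le_trans (my_arctan_sum_le s _ fun j hj => inv_nonneg.mpr (hfpos j hj).le) hinv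
    have h2 : ∑ j ∈ s, (lam j)⁻¹ ≤ μ⁻¹ := by
      by_contra h
      push_neg at h
      exact absurd (Real.arctan_strictMono h) (not_lt.mpr h1)
    calc μ * ∑ j ∈ s, (lam j)⁻¹ ≤ μ * μ⁻¹ := mul_le_mul_of_nonneg_left h2 hμ.le
      _ = 1 := mul_inv_cancel₀ hμ.ne'
  -- split the elementary symmetric sum
  obtain ⟨m, rfl⟩ : ∃ m, k = m + 1 := ⟨k - 1, by omega⟩
  rw [← hins, Finset.powersetCard_succ_insert hi0s]
  have hdisj : Disjoint (s.powersetCard (m + 1))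
      ((s.powersetCard m).image (insert i0)) := by
    rw [Finset.disjoint_left]
    intro T hT hT'
    rw [Finset.mem_powersetCard] at hT
    rw [Finset.mem_image] at hT'
    obtain ⟨S, hS, rfl⟩ := hT'
    exact hi0s (hT.1 (Finset.mem_insert_self _ _))
  rw [Finset.sum_union hdisj]
  have hinj : ∀ x ∈ s.powersetCard m, ∀ y ∈ s.powersetCard m,
      insert i0 x = insert i0 y → x = y := by
    intro x hx y hy hxy
    rw [Finset.mem_powersetCard] at hx hy
    have hx0 : i0 ∉ x := fun h => hi0s (hx.1 h)
    have hy0 : i0 ∉ y := fun h => hi0s (hy.1 h)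
    rw [← Finset.erase_insert hx0, ← Finset.erase_insert hy0, hxy]
  rw [Finset.sum_image hinj]
  have himg : ∑ S ∈ s.powersetCard m, ∏ i ∈ insert i0 S, lam i
      = lam i0 * ∑ S ∈ s.powersetCard m, ∏ i ∈ S, lam i := by
    rw [Finset.mul_sum]
    apply Finset.sum_congr rfl
    intro S hS
    rw [Finset.mem_powersetCard] at hS
    have hS0 : i0 ∉ S := fun h => hi0s (hS.1 h)
    rw [Finset.prod_insert hS0]
  rw [himg]
  haveI : Nonempty (Fin n) := ⟨i0⟩
  have hstep := my_esymm_step hfpos hμ.le hsum_inv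
    (m := m) (by rw [hcards]; omega)
  have hli0 : lam i0 = -μ := by rw [hμdef]; ring
  rw [hli0]
  linarith
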